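/- Let θ ∈ ℝ and ν ≠ 0. Let (U₁, V₁, W₁) and (U₂, V₂, W₂) be two solutions of the regularized Fourier X-mode system, normalized respectively by V₁(0) = iθ, W₁(0) = iδ(0), and by iν U₂(0) = 1. Then the Wronskian relation V₁(x)W₂(x) − W₁(x)V₂(x) = 1 holds for every x ∈ [-L,∞). -/

import Mathlib

open Complex

/-- The Wronskian relation between the first and second basis functions
(Proposition 5.8 of the paper): with the normalizations `V₁(0) = iθ`,
`W₁(0) = iδ(0)` and `iν U₂(0) = 1`, one has
`V₁(x)W₂(x) − W₁(x)V₂(x) = 1` for all `x ∈ [-L,∞)`. -/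
theorem wronskian_of_basis_functions_eq_one
    (L θ ν : ℝ) (hL : 0 < L) (hν : ν ≠ 0)
    (α δ : ℝ → ℝ)
    (hα : ContDiffOn ℝ 2 α (Set.Ici (-L)))
    (hαbd : ∃ C, ∀ x, -L ≤ x → |α x| ≤ C)
    (hα0 : α 0 = 0)
    (hδ : ContDiffOn ℝ 1 δ (Set.Ici (-L)))
    (hδbd : ∃ C, ∀ x, -L ≤ x → |δ x| ≤ C)
    (hδ0 : δ 0 ≠ 0)
    -- the first basis function
    (U₁ V₁ W₁ : ℝ → ℂ)
    (hVd₁ : ∀ x, -L ≤ x → HasDerivAt V₁ (W₁ x + Complex.I * (θ : ℂ) * U₁ x) x)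
    (halg₁ : ∀ x, -L ≤ x →
      Complex.I * (θ : ℂ) * W₁ x - ((α x : ℂ) + Complex.I * (ν : ℂ)) * U₁ x
        - Complex.I * (δ x : ℂ) * V₁ x = 0)
    (hWd₁ : ∀ x, -L ≤ x → HasDerivAt W₁
      (Complex.I * (δ x : ℂ) * U₁ x - ((α x : ℂ) + Complex.I * (ν : ℂ)) * V₁ x) x)
    (hV₁0 : V₁ 0 = Complex.I * (θ : ℂ)) (hW₁0 : W₁ 0 = Complex.I * (δ 0 : ℂ))
    -- the second basis function
    (U₂ V₂ W₂ : ℝ → ℂ)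
    (hVd₂ : ∀ x, -L ≤ x → HasDerivAt V₂ (W₂ x + Complex.I * (θ : ℂ) * U₂ x) x)
    (halg₂ : ∀ x, -L ≤ x →
      Complex.I * (θ : ℂ) * W₂ x - ((α x : ℂ) + Complex.I * (ν : ℂ)) * U₂ x
        - Complex.I * (δ x : ℂ) * V₂ x = 0)
    (hWd₂ : ∀ x, -L ≤ x → HasDerivAt W₂
      (Complex.I * (δ x : ℂ) * U₂ x - ((α x : ℂ) + Complex.I * (ν : ℂ)) * V₂ x) x)
    (hU₂0 : Complex.I * (ν : ℂ) * U₂ 0 = 1) :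
    ∀ x, -L ≤ x → V₁ x * W₂ x - W₁ x * V₂ x = 1 := by
  intro x hx
  set F : ℝ → ℂ := fun x => V₁ x * W₂ x - W₁ x * V₂ x with hF
  have hFd : ∀ y, -L ≤ y → HasDerivAt F 0 y := by
    intro y hy
    have h1 := ((hVd₁ y hy).mul (hWd₂ y hy)).sub ((hWd₁ y hy).mul (hVd₂ y hy))
    refine h1.congr_deriv (Eq.symm ?_)
    have e1 := halg₁ y hy
    have e2 := halg₂ y hy
    linear_combination (U₂ y) * e1 - (U₁ y) * e2
  have hdiff : DifferentiableOn ℝ F (Set.Ici (-L)) := fun y hy =>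
    ((hFd y hy).differentiableAt).differentiableWithinAt
  have hx0 : (0:ℝ) ∈ Set.Ici (-L) := by
    simp only [Set.mem_Ici]; linarith
  have hconst := (convex_Ici (-L)).is_const_of_fderivWithin_eq_zero hdiff
    (fun y hy => ((hFd y hy).hasFDerivAt.hasFDerivWithinAt.fderivWithin
      (uniqueDiffOn_Ici (-L) y hy)).trans (by ext; simp)) hx hx0
  have h0 : F 0 = 1 := by
    have e2 := halg₂ 0 (by linarith)
    simp only [hF, hV₁0, hW₁0]
    rw [hα0] at e2
    push_cast at e2 ⊢
    linear_combination e2 + hU₂0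
  calc V₁ x * W₂ x - W₁ x * V₂ x = F x := rfl
    _ = F 0 := hconst
    _ = 1 := h0
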